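/- Let p be a prime and K a field with exactly p² elements. Let α, β, c, d ∈ K with α, β, c, d all nonzero and (α·β)^{p−1} ≠ 1. Then γ := d·((d·β)^{p−1} − c^{p−1}) / (α·c^p·(1 − (α·β)^{p−1})) satisfies γ^p = γ; that is, γ always lies in the prime subfield of K. -/

import Mathlib

/-- Over a field with exactly `p²` elements, the quantity
`γ = d·((d·β)^(p-1) - c^(p-1)) / (α·c^p·(1 - (α·β)^(p-1)))` always lies in the prime
subfield, i.e. `γ^p = γ`. -/
theorem gamma_in_prime_subfield_card_p_sq (p : ℕ) [Fact p.Prime]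
    (K : Type*) [Field K] [Fintype K] (hcard : Fintype.card K = p ^ 2)
    (α β c d : K) (hα : α ≠ 0) (hβ : β ≠ 0) (hc : c ≠ 0) (hd : d ≠ 0)
    (hab : (α * β) ^ (p - 1) ≠ 1) :
    (d * ((d * β) ^ (p - 1) - c ^ (p - 1)) / (α * c ^ p * (1 - (α * β) ^ (p - 1)))) ^ p =
      d * ((d * β) ^ (p - 1) - c ^ (p - 1)) / (α * c ^ p * (1 - (α * β) ^ (p - 1))) := by
  have hp : p.Prime := Fact.out
  have hp1 : 1 ≤ p := hp.one_lt.le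
  -- characteristic p
  have hpz : (p : K) = 0 := by
    have h0 := Nat.cast_card_eq_zero K
    rw [hcard, Nat.cast_pow] at h0
    exact pow_eq_zero_iff (by norm_num) |>.mp h0
  haveI : CharP K p := by
    have := CharP.ringChar_of_prime_eq_zero hp hpz
    rw [← this]; exact ringChar.charP K
  -- x^(p*(p-1)) = (x^(p-1))⁻¹ for nonzero x
  have key : ∀ x : K, x ≠ 0 → x ^ ((p - 1) * p) = (x ^ (p - 1))⁻¹ := by
    intro x hx
    have hxcard : x ^ (p ^ 2) = x := by rw [← hcard]; exact FiniteField.pow_card x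
    have h1 : x ^ (p ^ 2 - 1) = 1 := by
      have : x ^ (p ^ 2 - 1) * x = x := by
        rw [← pow_succ, Nat.sub_add_cancel (Nat.one_le_pow _ _ hp.pos)]; exact hxcard
      field_simp at this
      exact this
    have h2 : x ^ ((p - 1) * p) * x ^ (p - 1) = 1 := by
      rw [← pow_add]
      have haux : ∀ q : ℕ, p ≤ q → (q - p) + (p - 1) = q - 1 := by
        intro q hq; omega
      have : (p - 1) * p + (p - 1) = p ^ 2 - 1 := by
        rw [Nat.sub_one_mul, pow_two]
        exact haux _ (Nat.le_mul_of_pos_left p hp.pos)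
      rw [this, h1]
    rw [mul_comm] at h2
    exact eq_inv_of_mul_eq_one_right h2
  have hsub : (1 : K) - (α * β) ^ (p - 1) ≠ 0 := sub_ne_zero.mpr (Ne.symm hab)
  have hsub' : (α * β) ^ (p - 1) - 1 ≠ 0 := sub_ne_zero.mpr hab
  have hdb : d * β ≠ 0 := mul_ne_zero hd hβ
  have hABne : α * β ≠ 0 := mul_ne_zero hα hβ
  have hdbp : (d * β) ^ (p - 1) ≠ 0 := pow_ne_zero _ hdb
  have hcp1 : c ^ (p - 1) ≠ 0 := pow_ne_zero _ hc
  have habp : (α * β) ^ (p - 1) ≠ 0 := pow_ne_zero _ hABne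
  have hcpp : c ^ (p * p) = c := by
    rw [show p * p = p ^ 2 by ring, ← hcard]; exact FiniteField.pow_card c
  rw [div_pow, mul_pow d (((d * β) ^ (p - 1) - c ^ (p - 1))) p,
    mul_pow (α * c ^ p) (1 - (α * β) ^ (p - 1)) p, mul_pow α (c ^ p) p,
    sub_pow_char, sub_pow_char, one_pow,
    ← pow_mul (d * β), ← pow_mul c (p-1), ← pow_mul (α * β), ← pow_mul c p, hcpp,
    key _ hdb, key c hc, key _ hABne]
  have hx : ∀ x : K, x ^ p = x * x ^ (p - 1) := fun x => by
    conv_lhs => rw [show p = 1 + (p - 1) by omega]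
    rw [pow_add, pow_one]
  rw [hx d, hx α, hx c]
  rw [div_eq_div_iff (mul_ne_zero (mul_ne_zero (mul_ne_zero hα (pow_ne_zero _ hα)) hc) (sub_ne_zero.mpr (fun h => hab (inv_eq_one.mp h.symm)))) (mul_ne_zero (mul_ne_zero hα (mul_ne_zero hc hcp1)) hsub)]
  field_simp
  ring
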